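/- For every natural number k > 1, the presented group ⟨x, y | x⁻¹yx = y², xᵏ = 1⟩ is finite of cardinality k·(2^k − 1). -/

import Mathlib

/-- The relator set of the presentation `⟨x, y | x⁻¹yx = y², xᵏ = 1⟩`, with `x` the
generator indexed by `true` and `y` the generator indexed by `false`. -/
def bsRels (k : ℕ) : Set (FreeGroup Bool) :=
  { (FreeGroup.of true)⁻¹ * FreeGroup.of false * FreeGroup.of true *
      (FreeGroup.of false ^ 2)⁻¹,
    FreeGroup.of true ^ k }

namespace BSAux

open Multiplicative SemidirectProduct PresentedGroup

/-- Distributive action as multiplicative automorphisms of `Multiplicative A`. -/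
def toMulAutM (G A : Type*) [Group G] [AddGroup A] [DistribMulAction G A] :
    G →* MulAut (Multiplicative A) where
  toFun g := AddEquiv.toMultiplicative (DistribMulAction.toAddAut G A g)
  map_one' := by ext x; simp [AddEquiv.toMultiplicative]
  map_mul' a b := by ext x; simp [AddEquiv.toMultiplicative, mul_smul]

theorem toMulAutM_apply (G A : Type*) [Group G] [AddGroup A] [DistribMulAction G A]
    (g : G) (a : A) : toMulAutM G A g (ofAdd a) = ofAdd (g • a) := rfl

theorem m_pos (k : ℕ) (hk : 1 < k) : 0 < 2 ^ k - 1 := by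
  have := Nat.one_lt_two_pow_iff.2 (by omega : k ≠ 0)
  omega

theorem two_pow_zmod (k : ℕ) : (2 : ZMod (2 ^ k - 1)) ^ k = 1 := by
  have h1 : (1:ℕ) ≤ 2 ^ k := Nat.one_le_two_pow
  have h2 : ((2 ^ k : ℕ) : ZMod (2 ^ k - 1)) = (((2 ^ k - 1) + 1 : ℕ) : ZMod (2 ^ k - 1)) := by
    congr 1; omega
  rw [Nat.cast_add, ZMod.natCast_self, zero_add, Nat.cast_one] at h2
  simpa using h2

theorem m_odd (k : ℕ) (hk : 1 < k) : Odd (2 ^ k - 1) :=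
  Nat.Even.sub_odd Nat.one_le_two_pow (Nat.even_pow.2 ⟨even_two, by omega⟩) odd_one

/-- `2` as a unit of `ZMod (2 ^ k - 1)`. -/
def u (k : ℕ) (hk : 1 < k) : (ZMod (2 ^ k - 1))ˣ :=
  ZMod.unitOfCoprime 2 ((m_odd k hk).coprime_two_left)

theorem u_coe (k : ℕ) (hk : 1 < k) :
    ((u k hk : (ZMod (2 ^ k - 1))ˣ) : ZMod (2 ^ k - 1)) = 2 := rfl

theorem u_pow (k : ℕ) (hk : 1 < k) : u k hk ^ (k : ℤ) = 1 := by
  rw [zpow_natCast]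
  ext
  push_cast [u_coe]
  exact two_pow_zmod k

variable {M : Type*} [Group M]

/-- Monoid hom out of `Multiplicative (ZMod n)` determined by an element whose `n`-th power
is `1`. -/
def zmodHom (n : ℕ) (g : M) (hg : g ^ (n : ℤ) = 1) : Multiplicative (ZMod n) →* M :=
  AddMonoidHom.toMultiplicativeLeft
    (ZMod.lift n ⟨zmultiplesHom (Additive M) (Additive.ofMul g), by
      simpa [zmultiplesHom] using congrArg Additive.ofMul hg⟩)

theorem zmodHom_intCast (n : ℕ) (g : M) (hg : g ^ (n : ℤ) = 1) (a : ℤ) :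
    zmodHom n g hg (ofAdd ((a : ℤ) : ZMod n)) = g ^ a := by
  simp [zmodHom, AddMonoidHom.coe_toMultiplicativeLeft, ZMod.lift_coe, zmultiplesHom]

theorem zmodHom_one (n : ℕ) (g : M) (hg : g ^ (n : ℤ) = 1) :
    zmodHom n g hg (ofAdd 1) = g := by
  simpa using zmodHom_intCast n g hg 1

theorem zmod_gen (n : ℕ) (g : Multiplicative (ZMod n)) :
    ∃ a : ℤ, g = ofAdd (1 : ZMod n) ^ a := by
  obtain ⟨a, ha⟩ := ZMod.intCast_surjective (n := n) g.toAdd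
  exact ⟨a, by rw [← ofAdd_zsmul, zsmul_one, ha]; rfl⟩

theorem zmod_hom_ext {n : ℕ} {f₁ f₂ : Multiplicative (ZMod n) →* M}
    (h : f₁ (ofAdd 1) = f₂ (ofAdd 1)) : f₁ = f₂ := by
  refine MonoidHom.ext fun g => ?_
  obtain ⟨a, rfl⟩ := zmod_gen n g
  rw [map_zpow, map_zpow, h]

/-- The action homomorphism for the semidirect product. -/
def bsPhi (k : ℕ) (hk : 1 < k) :
    Multiplicative (ZMod k) →* MulAut (Multiplicative (ZMod (2 ^ k - 1))) :=
  (toMulAutM _ _).comp (zmodHom k (u k hk) (u_pow k hk))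

/-- The concrete model: `ZMod (2^k-1) ⋊ ZMod k`. -/
abbrev BSGrp (k : ℕ) (hk : 1 < k) :=
  Multiplicative (ZMod (2 ^ k - 1)) ⋊[bsPhi k hk] Multiplicative (ZMod k)

theorem bsPhi_gen (k : ℕ) (hk : 1 < k) :
    bsPhi k hk (ofAdd 1) (ofAdd 1) = ofAdd (1 : ZMod (2 ^ k - 1)) * ofAdd 1 := by
  rw [bsPhi, MonoidHom.comp_apply, zmodHom_one, toMulAutM_apply, ← ofAdd_add]
  congr 1
  show (u k hk : ZMod (2 ^ k - 1)) * 1 = 1 + 1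
  rw [u_coe, mul_one]; norm_num

theorem rel_eq_one (k : ℕ) {r : FreeGroup Bool} (hr : r ∈ bsRels k) :
    PresentedGroup.mk (bsRels k) r = 1 :=
  (QuotientGroup.eq_one_iff _).2 (Subgroup.subset_normalClosure hr)

theorem conj_rel (k : ℕ) :
    (of true : PresentedGroup (bsRels k))⁻¹ * of false * of true = of false ^ 2 := by
  have h := rel_eq_one k (Set.mem_insert _ _)
  rw [map_mul, map_mul, map_mul, map_inv, map_inv, map_pow] at h
  have := mul_eq_one_iff_eq_inv.1 h
  simpa [PresentedGroup.of] using this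

theorem x_pow (k : ℕ) : (of true : PresentedGroup (bsRels k)) ^ k = 1 := by
  have h := rel_eq_one k (Set.mem_insert_of_mem _ rfl)
  rwa [map_pow] at h

theorem conj_pow_rel (k : ℕ) (n : ℕ) :
    (of true : PresentedGroup (bsRels k))⁻¹ ^ n * of false * of true ^ n =
      of false ^ (2 ^ n) := by
  induction n with
  | zero => simp
  | succ n ih =>
    have h1 : (of true : PresentedGroup (bsRels k))⁻¹ ^ (n+1) * of false * of true ^ (n+1)
        = (of true)⁻¹ * ((of true)⁻¹ ^ n * of false * of true ^ n) * of true := by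
      rw [pow_succ, pow_succ']
      group
    rw [h1, ih]
    have key : ∀ (a b : PresentedGroup (bsRels k)) (s : ℕ),
        (a⁻¹ * b * a) ^ s = a⁻¹ * b ^ s * a := by
      intro a b s
      induction s with
      | zero => simp
      | succ s ih2 => rw [pow_succ, ih2, pow_succ]; group
    have h2 : (of true : PresentedGroup (bsRels k))⁻¹ * of false ^ 2 ^ n * of true
        = ((of true)⁻¹ * of false * of true) ^ 2 ^ n := (key _ _ _).symm
    rw [h2, conj_rel, ← pow_mul]
    congr 1
    rw [pow_succ, Nat.mul_comm]

theorem y_pow (k : ℕ) (hk : 1 < k) :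
    (of false : PresentedGroup (bsRels k)) ^ (2 ^ k - 1) = 1 := by
  have h := conj_pow_rel k k
  rw [x_pow, inv_pow, x_pow, inv_one, one_mul, mul_one] at h
  have h2 : (of false : PresentedGroup (bsRels k)) ^ (2 ^ k - 1) * of false
      = 1 * of false := by
    rw [one_mul, ← pow_succ]
    have : 2 ^ k - 1 + 1 = 2 ^ k := by have : (1:ℕ) ≤ 2 ^ k := Nat.one_le_two_pow; omega
    rw [this, ← h]
  exact mul_right_cancel h2

/-- The hom sending the generator of `ZMod (2^k-1)` to `y`. -/
def fy (k : ℕ) (hk : 1 < k) :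
    Multiplicative (ZMod (2 ^ k - 1)) →* PresentedGroup (bsRels k) :=
  zmodHom _ (of false) (by rw [zpow_natCast]; exact y_pow k hk)

/-- The hom sending the generator of `ZMod k` to `x⁻¹`. -/
def fx (k : ℕ) (hk : 1 < k) :
    Multiplicative (ZMod k) →* PresentedGroup (bsRels k) :=
  zmodHom _ (of true)⁻¹ (by rw [zpow_natCast, inv_pow, x_pow, inv_one])

theorem compat (k : ℕ) (hk : 1 < k) : ∀ g,
    (fy k hk).comp (((bsPhi k hk) g).toMonoidHom) =
      (MulAut.conj ((fx k hk) g)).toMonoidHom.comp (fy k hk) := by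
  set F := fy k hk
  set X := fx k hk
  set φ := bsPhi k hk
  have key : ∀ g : Multiplicative (ZMod k),
      (∀ n, F (φ g n) = X g * F n * (X g)⁻¹) := by
    set S : Subgroup (Multiplicative (ZMod k)) :=
      { carrier := {g | ∀ n, F (φ g n) = X g * F n * (X g)⁻¹}
        one_mem' := by intro n; simp
        mul_mem' := by
          intro a b ha hb n
          rw [map_mul, MulAut.mul_apply, ha, hb, map_mul]
          group
        inv_mem' := by
          intro a ha n
          have h := ha (φ a⁻¹ n)
          rw [← MulAut.mul_apply, ← map_mul, mul_inv_cancel, map_one, MulAut.one_apply] at h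
          rw [map_inv X, inv_inv, h]
          simp [mul_assoc] }
    have hgen : ofAdd (1 : ZMod k) ∈ S := by
      have hAB : F.comp ((φ (ofAdd 1)).toMonoidHom) =
          (MulAut.conj (X (ofAdd 1))).toMonoidHom.comp F := by
        apply zmod_hom_ext
        simp only [MonoidHom.comp_apply, MulEquiv.coe_toMonoidHom, MulAut.conj_apply]
        rw [show φ = bsPhi k hk from rfl, bsPhi_gen, map_mul]
        have hF1 : F (ofAdd 1) = of false := zmodHom_one _ _ _
        have hX1 : X (ofAdd 1) = (of true)⁻¹ := zmodHom_one _ _ _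
        rw [hF1, hX1, inv_inv, conj_rel, sq]
      intro n
      have := DFunLike.congr_fun hAB n
      simpa using this
    intro g
    obtain ⟨a, rfl⟩ := zmod_gen k g
    exact S.zpow_mem hgen a
  intro g
  refine MonoidHom.ext fun n => ?_
  simp only [MonoidHom.comp_apply, MulEquiv.coe_toMonoidHom, MulAut.conj_apply]
  exact key g n

/-- The hom from the model to the presented group. -/
def toP (k : ℕ) (hk : 1 < k) : BSGrp k hk →* PresentedGroup (bsRels k) :=
  SemidirectProduct.lift (fy k hk) (fx k hk) (compat k hk)

theorem relcheck (k : ℕ) (hk : 1 < k) : ∀ r ∈ bsRels k,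
    FreeGroup.lift (fun b => if b then
        (inr (ofAdd (-1 : ZMod k)) : BSGrp k hk)
      else inl (ofAdd (1 : ZMod (2 ^ k - 1)))) r = 1 := by
  intro r hr
  set e : Multiplicative (ZMod k) := ofAdd (-1 : ZMod k)
  set a : Multiplicative (ZMod (2 ^ k - 1)) := ofAdd (1 : ZMod (2 ^ k - 1))
  rcases hr with hr | hr
  · subst hr
    rw [map_mul, map_mul, map_mul, map_inv, map_inv, map_pow]
    simp only [FreeGroup.lift_apply_of, if_true, if_false, Bool.false_eq_true]
    have he : e = (ofAdd (1 : ZMod k))⁻¹ := ofAdd_neg 1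
    rw [he, map_inv, inv_inv, ← map_inv inr (ofAdd (1 : ZMod k)),
      ← SemidirectProduct.inl_aut (φ := bsPhi k hk) (ofAdd (1 : ZMod k)) a,
      bsPhi_gen]
    simp only [sq, map_mul, mul_inv_rev]
    simp only [a]
    group
  · rw [Set.mem_singleton_iff] at hr
    subst hr
    rw [map_pow]
    simp only [FreeGroup.lift_apply_of, if_true]
    rw [← map_pow inr e k]
    have : e ^ k = 1 := by
      show ofAdd (-1 : ZMod k) ^ k = 1
      rw [← ofAdd_nsmul]
      simp [nsmul_eq_mul, ZMod.natCast_self]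
    rw [this, map_one]

/-- The hom from the presented group to the model. -/
def toG (k : ℕ) (hk : 1 < k) : PresentedGroup (bsRels k) →* BSGrp k hk :=
  PresentedGroup.toGroup (relcheck k hk)

theorem toP_toG (k : ℕ) (hk : 1 < k) :
    (toP k hk).comp (toG k hk) = MonoidHom.id _ := by
  apply PresentedGroup.ext
  intro b
  cases b
  · show toP k hk (toG k hk (of false)) = of false
    rw [toG, PresentedGroup.toGroup.of]
    simp only [if_false, Bool.false_eq_true]
    rw [toP, SemidirectProduct.lift_inl]
    exact zmodHom_one _ _ _
  · show toP k hk (toG k hk (of true)) = of true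
    rw [toG, PresentedGroup.toGroup.of]
    simp only [if_true]
    rw [toP, SemidirectProduct.lift_inr,
      show (ofAdd (-1 : ZMod k)) = (ofAdd (1 : ZMod k))⁻¹ from ofAdd_neg 1,
      map_inv, fx, zmodHom_one, inv_inv]

theorem toG_toP (k : ℕ) (hk : 1 < k) :
    (toG k hk).comp (toP k hk) = MonoidHom.id _ := by
  apply SemidirectProduct.hom_ext
  · rw [MonoidHom.comp_assoc, toP, SemidirectProduct.lift_comp_inl,
      MonoidHom.id_comp]
    apply zmod_hom_ext
    rw [MonoidHom.comp_apply, fy, zmodHom_one, toG, PresentedGroup.toGroup.of]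
    simp
  · rw [MonoidHom.comp_assoc, toP, SemidirectProduct.lift_comp_inr,
      MonoidHom.id_comp]
    apply zmod_hom_ext
    rw [MonoidHom.comp_apply, fx, zmodHom_one, map_inv, toG, PresentedGroup.toGroup.of]
    simp only [if_true]
    rw [← map_inv, ← ofAdd_neg, neg_neg]

/-- The presented group is isomorphic to the model. -/
def bsEquiv (k : ℕ) (hk : 1 < k) : PresentedGroup (bsRels k) ≃* BSGrp k hk :=
  MonoidHom.toMulEquiv (toG k hk) (toP k hk) (toP_toG k hk) (toG_toP k hk)

/-- The model is equivalent, as a type, to a product. -/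
def bsProdEquiv (k : ℕ) (hk : 1 < k) :
    BSGrp k hk ≃ Multiplicative (ZMod (2 ^ k - 1)) × Multiplicative (ZMod k) where
  toFun p := (p.left, p.right)
  invFun q := ⟨q.1, q.2⟩
  left_inv p := by cases p; rfl
  right_inv q := rfl

end BSAux

/-- For `k > 1`, the presented group `⟨x, y | x⁻¹yx = y², xᵏ = 1⟩` is finite of
cardinality `k * (2 ^ k - 1)`. -/
theorem stmt_2 (k : ℕ) (hk : 1 < k) :
    Finite (PresentedGroup (bsRels k)) ∧
      Nat.card (PresentedGroup (bsRels k)) = k * (2 ^ k - 1) := by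
  haveI : NeZero (2 ^ k - 1) := ⟨by have := BSAux.m_pos k hk; omega⟩
  haveI : NeZero k := ⟨by omega⟩
  have e : PresentedGroup (bsRels k) ≃
      Multiplicative (ZMod (2 ^ k - 1)) × Multiplicative (ZMod k) :=
    (BSAux.bsEquiv k hk).toEquiv.trans (BSAux.bsProdEquiv k hk)
  constructor
  · exact Finite.of_equiv _ e.symm
  · rw [Nat.card_congr e, Nat.card_prod]
    rw [Nat.card_congr (Multiplicative.ofAdd (α := ZMod (2 ^ k - 1))).symm,
      Nat.card_congr (Multiplicative.ofAdd (α := ZMod k)).symm,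
      Nat.card_zmod, Nat.card_zmod, Nat.mul_comm]
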